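/- Let A : [0,1]² → ℝ be a continuous symmetric kernel that is positive semi-definite: ∫₀¹∫₀¹ φ(x)A(x,y)φ(y)dxdy ≥ 0 for every φ ∈ L²([0,1]). If Θ solves ∂ₛΘ(s,x) = −α∫₀¹ A(x,y)Θ(s,y)dy with α > 0, then the prediction error PE(s) := ∫₀¹∫₀¹ Θ(s,x)A(x,y)Θ(s,y)dxdy is nonincreasing in s and satisfies PE(τ) ≤ MSE(0)/(ατ) for all τ > 0, where MSE(0) = ∫₀¹ Θ(0,x)²dx. -/

import Mathlib

open MeasureTheory Set intervalIntegral Metric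

open MeasureTheory Set intervalIntegral Metric

noncomputable def ff (B Θ : ℝ → ℝ → ℝ) (s x : ℝ) : ℝ := ∫ y in (0:ℝ)..1, B x y * Θ s y

lemma ff_cont {B Θ : ℝ → ℝ → ℝ} (hB : Continuous fun p : ℝ × ℝ => B p.1 p.2)
    (hΘ : Continuous fun p : ℝ × ℝ => Θ p.1 p.2) :
    Continuous fun p : ℝ × ℝ => ff B Θ p.1 p.2 := by
  have : Continuous (Function.uncurry fun (p : ℝ × ℝ) (y : ℝ) => B p.2 y * Θ p.1 y) := by
    apply Continuous.mul
    · exact hB.comp ((continuous_snd.comp continuous_fst).prodMk continuous_snd)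
    · exact hΘ.comp ((continuous_fst.comp continuous_fst).prodMk continuous_snd)
  exact intervalIntegral.continuous_parametric_intervalIntegral_of_continuous' this 0 1

lemma ff_bound {B Θ : ℝ → ℝ → ℝ} {MB CΘ t : ℝ}
    (hMB : ∀ x y, |B x y| ≤ MB)
    (hCΘ : ∀ y ∈ Icc (0:ℝ) 1, |Θ t y| ≤ CΘ) (x : ℝ) :
    |ff B Θ t x| ≤ MB * CΘ := by
  have h : ∀ y ∈ Set.uIoc (0:ℝ) 1, ‖B x y * Θ t y‖ ≤ MB * CΘ := by
    intro y hy
    rw [Set.uIoc_of_le zero_le_one] at hy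
    rw [Real.norm_eq_abs, abs_mul]
    exact mul_le_mul (hMB x y) (hCΘ y (Ioc_subset_Icc_self hy)) (abs_nonneg _)
      (le_trans (abs_nonneg _) (hMB x y))
  have := intervalIntegral.norm_integral_le_of_norm_le_const h
  simpa [ff] using this

lemma ff_hasDeriv {B Θ : ℝ → ℝ → ℝ} {α MB : ℝ} (hα : 0 < α)
    (hB : Continuous fun p : ℝ × ℝ => B p.1 p.2)
    (hMB : ∀ x y, |B x y| ≤ MB)
    (hΘ : Continuous fun p : ℝ × ℝ => Θ p.1 p.2)
    (hODE : ∀ s, 0 ≤ s → ∀ x ∈ Icc (0:ℝ) 1,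
      HasDerivAt (fun t => Θ t x) (-α * ff B Θ s x) s)
    {s₀ : ℝ} (hs₀ : 0 < s₀) (x : ℝ) :
    HasDerivAt (fun t => ff B Θ t x) (-α * ∫ y in (0:ℝ)..1, B x y * ff B Θ s₀ y) s₀ := by
  have hfc := ff_cont hB hΘ
  have hBx : ∀ x : ℝ, Continuous (fun y => B x y) :=
    fun x => hB.comp (continuous_const.prodMk continuous_id)
  have hΘrow : ∀ t : ℝ, Continuous (fun y => Θ t y) :=
    fun t => hΘ.comp (continuous_const.prodMk continuous_id)
  have hfrow : ∀ t : ℝ, Continuous (fun y => ff B Θ t y) :=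
    fun t => hfc.comp (continuous_const.prodMk continuous_id)
  obtain ⟨CΘ, hCΘ⟩ := (IsCompact.prod (isCompact_Icc (a := (0:ℝ)) (b := 2*s₀))
    (isCompact_Icc (a := (0:ℝ)) (b := 1))).exists_bound_of_continuousOn hΘ.continuousOn
  have hfb : ∀ t ∈ Icc (0:ℝ) (2*s₀), ∀ y : ℝ, |ff B Θ t y| ≤ MB * CΘ := by
    intro t ht y
    exact ff_bound hMB (fun z hz => by
      have := hCΘ (t, z) ⟨ht, hz⟩
      simpa [Real.norm_eq_abs] using this) y
  have hball : ∀ t ∈ ball s₀ s₀, t ∈ Icc (0:ℝ) (2*s₀) := by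
    intro t ht
    rw [mem_ball, Real.dist_eq, abs_sub_lt_iff] at ht
    constructor <;> linarith [ht.1, ht.2]
  have key := (intervalIntegral.hasDerivAt_integral_of_dominated_loc_of_deriv_le
    (F := fun t y => B x y * Θ t y)
    (F' := fun t y => B x y * (-α * ff B Θ t y))
    (x₀ := s₀) (s := ball s₀ s₀) (bound := fun _ => MB * (α * (MB * CΘ)))
    (a := 0) (b := 1) (μ := volume) (ball_mem_nhds s₀ hs₀)
    (Filter.Eventually.of_forall fun t =>
      ((hBx x).mul (hΘrow t)).aestronglyMeasurable)
    (((hBx x).mul (hΘrow s₀)).intervalIntegrable 0 1)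
    (((hBx x).mul (continuous_const.mul (hfrow s₀))).aestronglyMeasurable)
    (Filter.Eventually.of_forall fun y _ t ht => by
      have hfb' := hfb t (hball t ht) y
      rw [Real.norm_eq_abs, abs_mul, abs_mul, abs_neg, abs_of_pos hα]
      have h0 : (0:ℝ) ≤ MB := le_trans (abs_nonneg _) (hMB 0 0)
      have h1 : α * |ff B Θ t y| ≤ α * (MB * CΘ) := by
        exact mul_le_mul_of_nonneg_left hfb' hα.le
      exact mul_le_mul (hMB x y) h1 (by positivity) h0)
    (intervalIntegrable_const)
    (Filter.Eventually.of_forall fun y hy t ht => by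
      have hy' : y ∈ Icc (0:ℝ) 1 := by
        rw [Set.uIoc_of_le zero_le_one] at hy
        exact Ioc_subset_Icc_self hy
      have ht' : 0 < t := (hball t ht).1.lt_of_ne' (by
        rintro rfl
        simp [mem_ball, Real.dist_eq, abs_of_nonneg hs₀.le] at ht)
      exact (hODE t ht'.le y hy').const_mul (B x y))).2
  have heq : (∫ y in (0:ℝ)..1, B x y * (-α * ff B Θ s₀ y))
      = -α * ∫ y in (0:ℝ)..1, B x y * ff B Θ s₀ y := by
    rw [← intervalIntegral.integral_const_mul]
    congr 1
    ext y
    ring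
  rw [heq] at key
  exact key

lemma key_swap {B Θ : ℝ → ℝ → ℝ}
    (hB : Continuous fun p : ℝ × ℝ => B p.1 p.2)
    (hBsymm : ∀ x y, B x y = B y x)
    (hΘ : Continuous fun p : ℝ × ℝ => Θ p.1 p.2) (s₀ : ℝ) :
    (∫ x in (0:ℝ)..1, Θ s₀ x * ∫ y in (0:ℝ)..1, B x y * ff B Θ s₀ y)
      = ∫ y in (0:ℝ)..1, ff B Θ s₀ y * ff B Θ s₀ y := by
  have hfc := ff_cont hB hΘ
  have hfrow : Continuous (fun y => ff B Θ s₀ y) :=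
    hfc.comp (continuous_const.prodMk continuous_id)
  have hΘrow : Continuous (fun y => Θ s₀ y) :=
    hΘ.comp (continuous_const.prodMk continuous_id)
  have hgcont : Continuous (Function.uncurry fun x y => Θ s₀ x * (B x y * ff B Θ s₀ y)) := by
    apply Continuous.mul
    · exact hΘrow.comp continuous_fst
    · exact hB.mul (hfrow.comp continuous_snd)
  have hint : Integrable (Function.uncurry fun x y => Θ s₀ x * (B x y * ff B Θ s₀ y))
      ((volume.restrict (Ioc (0:ℝ) 1)).prod (volume.restrict (Ioc (0:ℝ) 1))) := by
    rw [Measure.prod_restrict, ← Measure.volume_eq_prod]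
    exact ((hgcont.locallyIntegrable.integrableOn_isCompact
      (isCompact_Icc.prod isCompact_Icc)).mono_set
      (prod_mono Ioc_subset_Icc_self Ioc_subset_Icc_self))
  calc (∫ x in (0:ℝ)..1, Θ s₀ x * ∫ y in (0:ℝ)..1, B x y * ff B Θ s₀ y)
      = ∫ x in (0:ℝ)..1, ∫ y in (0:ℝ)..1, Θ s₀ x * (B x y * ff B Θ s₀ y) := by
        simp only [← intervalIntegral.integral_const_mul]
    _ = ∫ x in Ioc (0:ℝ) 1, ∫ y in Ioc (0:ℝ) 1, Θ s₀ x * (B x y * ff B Θ s₀ y) := by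
        simp only [intervalIntegral.integral_of_le zero_le_one]
    _ = ∫ y in Ioc (0:ℝ) 1, ∫ x in Ioc (0:ℝ) 1, Θ s₀ x * (B x y * ff B Θ s₀ y) := by
        exact integral_integral_swap hint
    _ = ∫ y in Ioc (0:ℝ) 1, ff B Θ s₀ y * ff B Θ s₀ y := by
        apply MeasureTheory.integral_congr_ae
        filter_upwards with y
        have : (fun x => Θ s₀ x * (B x y * ff B Θ s₀ y))
            = fun x => ff B Θ s₀ y * (B y x * Θ s₀ x) := by
          funext x; rw [hBsymm x y]; ring
        rw [this, MeasureTheory.integral_const_mul]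
        rw [show (∫ x in Ioc (0:ℝ) 1, B y x * Θ s₀ x) = ff B Θ s₀ y by
          rw [ff, intervalIntegral.integral_of_le zero_le_one]]
    _ = ∫ y in (0:ℝ)..1, ff B Θ s₀ y * ff B Θ s₀ y := by
        rw [intervalIntegral.integral_of_le zero_le_one]

lemma PE_hasDeriv {B Θ : ℝ → ℝ → ℝ} {α MB : ℝ} (hα : 0 < α)
    (hB : Continuous fun p : ℝ × ℝ => B p.1 p.2)
    (hBsymm : ∀ x y, B x y = B y x)
    (hMB : ∀ x y, |B x y| ≤ MB)
    (hΘ : Continuous fun p : ℝ × ℝ => Θ p.1 p.2)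
    (hODE : ∀ s, 0 ≤ s → ∀ x ∈ Icc (0:ℝ) 1,
      HasDerivAt (fun t => Θ t x) (-α * ff B Θ s x) s)
    {s₀ : ℝ} (hs₀ : 0 < s₀) :
    HasDerivAt (fun s => ∫ x in (0:ℝ)..1, Θ s x * ff B Θ s x)
      (-(2*α) * ∫ x in (0:ℝ)..1, ff B Θ s₀ x * ff B Θ s₀ x) s₀ := by
  have hfc := ff_cont hB hΘ
  have hBx : ∀ x : ℝ, Continuous (fun y => B x y) :=
    fun x => hB.comp (continuous_const.prodMk continuous_id)
  have hΘrow : ∀ t : ℝ, Continuous (fun y => Θ t y) :=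
    fun t => hΘ.comp (continuous_const.prodMk continuous_id)
  have hfrow : ∀ t : ℝ, Continuous (fun y => ff B Θ t y) :=
    fun t => hfc.comp (continuous_const.prodMk continuous_id)
  -- continuity of x ↦ ∫ y, B x y * ff t y
  have hIcont : ∀ t : ℝ, Continuous (fun x => ∫ y in (0:ℝ)..1, B x y * ff B Θ t y) := by
    intro t
    apply intervalIntegral.continuous_parametric_intervalIntegral_of_continuous'
    exact hB.mul ((hfrow t).comp continuous_snd)
  obtain ⟨CΘ, hCΘ⟩ := (IsCompact.prod (isCompact_Icc (a := (0:ℝ)) (b := 2*s₀))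
    (isCompact_Icc (a := (0:ℝ)) (b := 1))).exists_bound_of_continuousOn hΘ.continuousOn
  have hCΘ' : ∀ t ∈ Icc (0:ℝ) (2*s₀), ∀ y ∈ Icc (0:ℝ) 1, |Θ t y| ≤ CΘ := by
    intro t ht y hy
    simpa [Real.norm_eq_abs] using hCΘ (t, y) ⟨ht, hy⟩
  have h0M : (0:ℝ) ≤ MB := le_trans (abs_nonneg _) (hMB 0 0)
  have h0C : (0:ℝ) ≤ CΘ := le_trans (abs_nonneg _) (hCΘ' 0 ⟨le_refl 0, by linarith⟩ 0 ⟨le_refl 0, zero_le_one⟩)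
  have hfb : ∀ t ∈ Icc (0:ℝ) (2*s₀), ∀ y : ℝ, |ff B Θ t y| ≤ MB * CΘ :=
    fun t ht y => ff_bound hMB (hCΘ' t ht) y
  have hIb : ∀ t ∈ Icc (0:ℝ) (2*s₀), ∀ x : ℝ,
      |∫ y in (0:ℝ)..1, B x y * ff B Θ t y| ≤ MB * (MB * CΘ) := by
    intro t ht x
    have h : ∀ y ∈ Set.uIoc (0:ℝ) 1, ‖B x y * ff B Θ t y‖ ≤ MB * (MB * CΘ) := by
      intro y _
      rw [Real.norm_eq_abs, abs_mul]
      exact mul_le_mul (hMB x y) (hfb t ht y) (abs_nonneg _) h0M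
    simpa using intervalIntegral.norm_integral_le_of_norm_le_const h
  have hball : ∀ t ∈ ball s₀ s₀, t ∈ Icc (0:ℝ) (2*s₀) := by
    intro t ht
    rw [mem_ball, Real.dist_eq, abs_sub_lt_iff] at ht
    constructor <;> linarith [ht.1, ht.2]
  have hballpos : ∀ t ∈ ball s₀ s₀, 0 < t := by
    intro t ht
    rw [mem_ball, Real.dist_eq, abs_sub_lt_iff] at ht
    linarith [ht.2]
  set F' : ℝ → ℝ → ℝ := fun t x =>
    (-α * ff B Θ t x) * ff B Θ t x + Θ t x * (-α * ∫ y in (0:ℝ)..1, B x y * ff B Θ t y)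
    with hF'
  have key := (intervalIntegral.hasDerivAt_integral_of_dominated_loc_of_deriv_le
    (F := fun t x => Θ t x * ff B Θ t x) (F' := F')
    (x₀ := s₀) (s := ball s₀ s₀)
    (bound := fun _ => α * (MB*CΘ) * (MB*CΘ) + CΘ * (α * (MB * (MB*CΘ))))
    (a := 0) (b := 1) (μ := volume) (ball_mem_nhds s₀ hs₀)
    (Filter.Eventually.of_forall fun t =>
      ((hΘrow t).mul (hfrow t)).aestronglyMeasurable)
    (((hΘrow s₀).mul (hfrow s₀)).intervalIntegrable 0 1)
    (((continuous_const.mul (hfrow s₀)).mul (hfrow s₀)).add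
      ((hΘrow s₀).mul (continuous_const.mul (hIcont s₀)))).aestronglyMeasurable
    (Filter.Eventually.of_forall fun x hx t ht => by
      have hx' : x ∈ Icc (0:ℝ) 1 := by
        rw [Set.uIoc_of_le zero_le_one] at hx
        exact Ioc_subset_Icc_self hx
      have ht' := hball t ht
      have h1 : |(-α * ff B Θ t x) * ff B Θ t x| ≤ α * (MB*CΘ) * (MB*CΘ) := by
        rw [abs_mul, abs_mul, abs_neg, abs_of_pos hα]
        have := hfb t ht' x
        have h2 : α * |ff B Θ t x| ≤ α * (MB*CΘ) := mul_le_mul_of_nonneg_left this hα.le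
        exact mul_le_mul h2 this (abs_nonneg _) (by positivity)
      have h3 : |Θ t x * (-α * ∫ y in (0:ℝ)..1, B x y * ff B Θ t y)|
          ≤ CΘ * (α * (MB * (MB*CΘ))) := by
        rw [abs_mul, abs_mul, abs_neg, abs_of_pos hα]
        exact mul_le_mul (hCΘ' t ht' x hx')
          (mul_le_mul_of_nonneg_left (hIb t ht' x) hα.le) (by positivity) h0C
      calc ‖F' t x‖ ≤ |(-α * ff B Θ t x) * ff B Θ t x|
            + |Θ t x * (-α * ∫ y in (0:ℝ)..1, B x y * ff B Θ t y)| := by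
            rw [Real.norm_eq_abs]; exact abs_add_le _ _
        _ ≤ _ := add_le_add h1 h3)
    (intervalIntegrable_const)
    (Filter.Eventually.of_forall fun x hx t ht => by
      have hx' : x ∈ Icc (0:ℝ) 1 := by
        rw [Set.uIoc_of_le zero_le_one] at hx
        exact Ioc_subset_Icc_self hx
      exact (hODE t (hballpos t ht).le x hx').mul
        (ff_hasDeriv hα hB hMB hΘ hODE (hballpos t ht) x))).2
  have heq : (∫ x in (0:ℝ)..1, F' s₀ x)
      = -(2*α) * ∫ x in (0:ℝ)..1, ff B Θ s₀ x * ff B Θ s₀ x := by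
    rw [hF']
    beta_reduce
    rw [intervalIntegral.integral_add
      (f := fun x => (-α * ff B Θ s₀ x) * ff B Θ s₀ x)
      (g := fun x => Θ s₀ x * (-α * ∫ y in (0:ℝ)..1, B x y * ff B Θ s₀ y))
      (((continuous_const.mul (hfrow s₀)).mul (hfrow s₀)).intervalIntegrable 0 1)
      (((hΘrow s₀).mul (continuous_const.mul (hIcont s₀))).intervalIntegrable 0 1)]
    have e1 : (∫ x in (0:ℝ)..1, (-α * ff B Θ s₀ x) * ff B Θ s₀ x)
        = -α * ∫ x in (0:ℝ)..1, ff B Θ s₀ x * ff B Θ s₀ x := by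
      rw [← intervalIntegral.integral_const_mul]
      congr 1; ext x; ring
    have e2 : (∫ x in (0:ℝ)..1, Θ s₀ x * (-α * ∫ y in (0:ℝ)..1, B x y * ff B Θ s₀ y))
        = -α * ∫ x in (0:ℝ)..1, ff B Θ s₀ x * ff B Θ s₀ x := by
      have : (∫ x in (0:ℝ)..1, Θ s₀ x * (-α * ∫ y in (0:ℝ)..1, B x y * ff B Θ s₀ y))
          = -α * ∫ x in (0:ℝ)..1, Θ s₀ x * ∫ y in (0:ℝ)..1, B x y * ff B Θ s₀ y := by
        rw [← intervalIntegral.integral_const_mul]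
        congr 1; ext x; ring
      rw [this, key_swap hB hBsymm hΘ s₀]
    rw [e1, e2]; ring
  rw [heq] at key
  exact key

lemma MSE_hasDeriv {B Θ : ℝ → ℝ → ℝ} {α MB : ℝ} (hα : 0 < α)
    (hB : Continuous fun p : ℝ × ℝ => B p.1 p.2)
    (hMB : ∀ x y, |B x y| ≤ MB)
    (hΘ : Continuous fun p : ℝ × ℝ => Θ p.1 p.2)
    (hODE : ∀ s, 0 ≤ s → ∀ x ∈ Icc (0:ℝ) 1,
      HasDerivAt (fun t => Θ t x) (-α * ff B Θ s x) s)
    {s₀ : ℝ} (hs₀ : 0 < s₀) :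
    HasDerivAt (fun s => ∫ x in (0:ℝ)..1, Θ s x ^ 2)
      (-(2*α) * ∫ x in (0:ℝ)..1, Θ s₀ x * ff B Θ s₀ x) s₀ := by
  have hfc := ff_cont hB hΘ
  have hΘrow : ∀ t : ℝ, Continuous (fun y => Θ t y) :=
    fun t => hΘ.comp (continuous_const.prodMk continuous_id)
  have hfrow : ∀ t : ℝ, Continuous (fun y => ff B Θ t y) :=
    fun t => hfc.comp (continuous_const.prodMk continuous_id)
  obtain ⟨CΘ, hCΘ⟩ := (IsCompact.prod (isCompact_Icc (a := (0:ℝ)) (b := 2*s₀))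
    (isCompact_Icc (a := (0:ℝ)) (b := 1))).exists_bound_of_continuousOn hΘ.continuousOn
  have hCΘ' : ∀ t ∈ Icc (0:ℝ) (2*s₀), ∀ y ∈ Icc (0:ℝ) 1, |Θ t y| ≤ CΘ := by
    intro t ht y hy
    simpa [Real.norm_eq_abs] using hCΘ (t, y) ⟨ht, hy⟩
  have h0C : (0:ℝ) ≤ CΘ :=
    le_trans (abs_nonneg _) (hCΘ' 0 ⟨le_refl 0, by linarith⟩ 0 ⟨le_refl 0, zero_le_one⟩)
  have hfb : ∀ t ∈ Icc (0:ℝ) (2*s₀), ∀ y : ℝ, |ff B Θ t y| ≤ MB * CΘ :=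
    fun t ht y => ff_bound hMB (hCΘ' t ht) y
  have hball : ∀ t ∈ ball s₀ s₀, t ∈ Icc (0:ℝ) (2*s₀) := by
    intro t ht
    rw [mem_ball, Real.dist_eq, abs_sub_lt_iff] at ht
    constructor <;> linarith [ht.1, ht.2]
  have hballpos : ∀ t ∈ ball s₀ s₀, 0 < t := by
    intro t ht
    rw [mem_ball, Real.dist_eq, abs_sub_lt_iff] at ht
    linarith [ht.2]
  set F' : ℝ → ℝ → ℝ := fun t x => (2:ℕ) * Θ t x ^ (2-1) * (-α * ff B Θ t x) with hF'
  have key := (intervalIntegral.hasDerivAt_integral_of_dominated_loc_of_deriv_le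
    (F := fun t x => Θ t x ^ 2) (F' := F')
    (x₀ := s₀) (s := ball s₀ s₀)
    (bound := fun _ => 2 * CΘ * (α * (MB * CΘ)))
    (a := 0) (b := 1) (μ := volume) (ball_mem_nhds s₀ hs₀)
    (Filter.Eventually.of_forall fun t => ((hΘrow t).pow 2).aestronglyMeasurable)
    (((hΘrow s₀).pow 2).intervalIntegrable 0 1)
    ((((continuous_const.mul ((hΘrow s₀).pow 1)).mul
      (continuous_const.mul (hfrow s₀)))).aestronglyMeasurable)
    (Filter.Eventually.of_forall fun x hx t ht => by
      have hx' : x ∈ Icc (0:ℝ) 1 := by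
        rw [Set.uIoc_of_le zero_le_one] at hx
        exact Ioc_subset_Icc_self hx
      have ht' := hball t ht
      rw [Real.norm_eq_abs, hF']
      simp only [show (2-1 : ℕ) = 1 from rfl, pow_one]
      rw [abs_mul, abs_mul, abs_mul, abs_neg, abs_of_pos hα]
      have h2 : |((2:ℕ):ℝ)| = 2 := by norm_num
      rw [h2]
      have := hCΘ' t ht' x hx'
      have hf := hfb t ht' x
      have : 2 * |Θ t x| ≤ 2 * CΘ := by linarith
      exact mul_le_mul this (mul_le_mul_of_nonneg_left hf hα.le) (by positivity) (by positivity))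
    (intervalIntegrable_const)
    (Filter.Eventually.of_forall fun x hx t ht => by
      have hx' : x ∈ Icc (0:ℝ) 1 := by
        rw [Set.uIoc_of_le zero_le_one] at hx
        exact Ioc_subset_Icc_self hx
      exact (hODE t (hballpos t ht).le x hx').pow 2)).2
  have heq : (∫ x in (0:ℝ)..1, F' s₀ x)
      = -(2*α) * ∫ x in (0:ℝ)..1, Θ s₀ x * ff B Θ s₀ x := by
    rw [hF', ← intervalIntegral.integral_const_mul]
    congr 1; ext x
    simp only [show (2-1 : ℕ) = 1 from rfl, pow_one]
    push_cast
    ring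
  rw [heq] at key
  exact key

theorem key_main {B Θ : ℝ → ℝ → ℝ} {α MB : ℝ} (hα : 0 < α)
    (hB : Continuous fun p : ℝ × ℝ => B p.1 p.2)
    (hBsymm : ∀ x y, B x y = B y x)
    (hMB : ∀ x y, |B x y| ≤ MB)
    (hΘ : Continuous fun p : ℝ × ℝ => Θ p.1 p.2)
    (hODE : ∀ s, 0 ≤ s → ∀ x ∈ Icc (0:ℝ) 1,
      HasDerivAt (fun t => Θ t x) (-α * ff B Θ s x) s) :
    AntitoneOn (fun s => ∫ x in (0:ℝ)..1, Θ s x * ff B Θ s x) (Ici 0) ∧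
    ∀ τ : ℝ, 0 < τ → (∫ x in (0:ℝ)..1, Θ τ x * ff B Θ τ x)
      ≤ (∫ x in (0:ℝ)..1, Θ 0 x ^ 2) / (α * τ) := by
  have hfc := ff_cont hB hΘ
  set PE : ℝ → ℝ := fun s => ∫ x in (0:ℝ)..1, Θ s x * ff B Θ s x with hPE
  set MSE : ℝ → ℝ := fun s => ∫ x in (0:ℝ)..1, Θ s x ^ 2 with hMSE
  have hPEc : Continuous PE := by
    apply intervalIntegral.continuous_parametric_intervalIntegral_of_continuous'
    exact hΘ.mul hfc
  have hMSEc : Continuous MSE := by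
    apply intervalIntegral.continuous_parametric_intervalIntegral_of_continuous'
    exact hΘ.pow 2
  have hMSEnn : ∀ s, 0 ≤ MSE s :=
    fun s => intervalIntegral.integral_nonneg zero_le_one (fun x _ => sq_nonneg _)
  have hPEanti : AntitoneOn PE (Ici 0) := by
    apply antitoneOn_of_deriv_nonpos (convex_Ici 0) hPEc.continuousOn
    · intro s hs
      rw [interior_Ici] at hs
      exact ((PE_hasDeriv hα hB hBsymm hMB hΘ hODE hs).differentiableAt).differentiableWithinAt
    · intro s hs
      rw [interior_Ici] at hs
      rw [(PE_hasDeriv hα hB hBsymm hMB hΘ hODE hs).deriv]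
      have hnn : 0 ≤ ∫ x in (0:ℝ)..1, ff B Θ s x * ff B Θ s x :=
        intervalIntegral.integral_nonneg zero_le_one (fun x _ => mul_self_nonneg _)
      nlinarith
  refine ⟨hPEanti, fun τ hτ => ?_⟩
  set c : ℝ := 2 * α * PE τ with hc
  have hanti : AntitoneOn (fun s => MSE s + c * s) (Icc 0 τ) := by
    apply antitoneOn_of_deriv_nonpos (convex_Icc 0 τ)
    · exact (hMSEc.add (continuous_const.mul continuous_id)).continuousOn
    · intro s hs
      rw [interior_Icc] at hs
      exact (((MSE_hasDeriv hα hB hMB hΘ hODE hs.1).add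
        ((hasDerivAt_id s).const_mul c)).differentiableAt).differentiableWithinAt
    · intro s hs
      rw [interior_Icc] at hs
      have hd : HasDerivAt (fun u => MSE u + c * u)
          ((-(2*α) * ∫ x in (0:ℝ)..1, Θ s x * ff B Θ s x) + c * 1) s :=
        (MSE_hasDeriv hα hB hMB hΘ hODE hs.1).add ((hasDerivAt_id s).const_mul c)
      rw [hd.deriv]
      have hPEle : PE τ ≤ PE s := hPEanti (le_of_lt hs.1) (le_trans hs.1.le hs.2.le) hs.2.le
      rw [hc]
      nlinarith
  have h01 : MSE τ + c * τ ≤ MSE 0 + c * 0 :=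
    hanti (left_mem_Icc.mpr hτ.le) (right_mem_Icc.mpr hτ.le) hτ.le
  have hkey : 2 * α * PE τ * τ ≤ MSE 0 := by
    have := hMSEnn τ
    rw [hc] at h01
    nlinarith
  have hgoal : PE τ ≤ MSE 0 / (α * τ) := by
    rw [le_div_iff₀ (by positivity : (0:ℝ) < α * τ)]
    rcases le_or_gt 0 (PE τ) with h | h
    · nlinarith [mul_nonneg (mul_nonneg hα.le hτ.le) h]
    · have := mul_neg_of_neg_of_pos h (by positivity : (0:ℝ) < α * τ)
      nlinarith [hMSEnn 0]
  exact hgoal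

/-- For a positive semi-definite continuous kernel, the prediction error of the limiting
ODE trajectory is nonincreasing and decays at rate `MSE(0)/(ατ)`. -/
theorem stmt5 (A Θ : ℝ → ℝ → ℝ) (α : ℝ) (hα : 0 < α)
    (hAcont : ContinuousOn (fun p : ℝ × ℝ => A p.1 p.2)
      (Set.Icc 0 1 ×ˢ Set.Icc 0 1))
    (hsymm : ∀ x y, A x y = A y x)
    (hPSD : ∀ φ : ℝ → ℝ, IntegrableOn (fun x => (φ x) ^ 2) (Set.Icc 0 1) →
      0 ≤ ∫ x in (0:ℝ)..1, ∫ y in (0:ℝ)..1, φ x * A x y * φ y)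
    (hΘcont : Continuous (fun p : ℝ × ℝ => Θ p.1 p.2))
    (hL2 : ∀ s : ℝ, IntervalIntegrable (fun x => (Θ s x) ^ 2) volume 0 1)
    (hODE : ∀ s : ℝ, 0 ≤ s → ∀ x ∈ Set.Icc (0:ℝ) 1,
      HasDerivAt (fun t => Θ t x) (-α * ∫ y in (0:ℝ)..1, A x y * Θ s y) s) :
    (∀ s₁ s₂ : ℝ, 0 ≤ s₁ → s₁ ≤ s₂ →
      (∫ x in (0:ℝ)..1, ∫ y in (0:ℝ)..1, Θ s₂ x * A x y * Θ s₂ y)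
        ≤ ∫ x in (0:ℝ)..1, ∫ y in (0:ℝ)..1, Θ s₁ x * A x y * Θ s₁ y) ∧
    (∀ τ : ℝ, 0 < τ →
      (∫ x in (0:ℝ)..1, ∫ y in (0:ℝ)..1, Θ τ x * A x y * Θ τ y)
        ≤ (∫ x in (0:ℝ)..1, (Θ 0 x) ^ 2) / (α * τ)) := by
  classical
  set c : ℝ → ℝ := fun t => min 1 (max 0 t) with hcdef
  have hc_cont : Continuous c := continuous_const.min (continuous_const.max continuous_id)
  have hc_mem : ∀ t, c t ∈ Icc (0:ℝ) 1 :=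
    fun t => ⟨le_min zero_le_one (le_max_left 0 t), min_le_left _ _⟩
  have hc_eq : ∀ t ∈ Icc (0:ℝ) 1, c t = t := by
    intro t ht
    rw [hcdef]
    simp only [max_eq_right ht.1, min_eq_right ht.2]
  set B : ℝ → ℝ → ℝ := fun x y => A (c x) (c y) with hBdef
  have hB : Continuous fun p : ℝ × ℝ => B p.1 p.2 :=
    hAcont.comp_continuous
      ((hc_cont.comp continuous_fst).prodMk (hc_cont.comp continuous_snd))
      (fun p => ⟨hc_mem _, hc_mem _⟩)
  have hBsymm : ∀ x y, B x y = B y x := fun x y => hsymm (c x) (c y)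
  obtain ⟨MB, hMB0⟩ := (IsCompact.prod (isCompact_Icc (a := (0:ℝ)) (b := 1))
    (isCompact_Icc (a := (0:ℝ)) (b := 1))).exists_bound_of_continuousOn hAcont
  have hMB : ∀ x y, |B x y| ≤ MB := fun x y => by
    simpa [Real.norm_eq_abs] using hMB0 (c x, c y) ⟨hc_mem x, hc_mem y⟩
  have hABeq : ∀ x ∈ Icc (0:ℝ) 1, ∀ y ∈ Icc (0:ℝ) 1, A x y = B x y := by
    intro x hx y hy
    rw [hBdef]
    simp only [hc_eq x hx, hc_eq y hy]
  have hODE' : ∀ s, 0 ≤ s → ∀ x ∈ Icc (0:ℝ) 1,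
      HasDerivAt (fun t => Θ t x) (-α * ff B Θ s x) s := by
    intro s hs x hx
    have h := hODE s hs x hx
    have heq : (∫ y in (0:ℝ)..1, A x y * Θ s y) = ff B Θ s x := by
      simp only [ff]
      apply intervalIntegral.integral_congr
      intro y hy
      rw [Set.uIcc_of_le zero_le_one] at hy
      show A x y * Θ s y = B x y * Θ s y
      rw [hABeq x hx y hy]
    rwa [heq] at h
  have hPEeq : ∀ s, (∫ x in (0:ℝ)..1, ∫ y in (0:ℝ)..1, Θ s x * A x y * Θ s y)
      = ∫ x in (0:ℝ)..1, Θ s x * ff B Θ s x := by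
    intro s
    apply intervalIntegral.integral_congr
    intro x hx
    rw [Set.uIcc_of_le zero_le_one] at hx
    show (∫ y in (0:ℝ)..1, Θ s x * A x y * Θ s y) = Θ s x * ff B Θ s x
    simp only [ff]
    rw [← intervalIntegral.integral_const_mul]
    apply intervalIntegral.integral_congr
    intro y hy
    rw [Set.uIcc_of_le zero_le_one] at hy
    show Θ s x * A x y * Θ s y = Θ s x * (B x y * Θ s y)
    rw [hABeq x hx y hy]
    ring
  obtain ⟨hmono, hrate⟩ := key_main hα hB hBsymm hMB hΘcont hODE'
  constructor
  · intro s₁ s₂ hs₁ h12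
    rw [hPEeq s₁, hPEeq s₂]
    exact hmono hs₁ (le_trans hs₁ h12) h12
  · intro τ hτ
    rw [hPEeq τ]
    exact hrate τ hτ
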